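/- arXiv:1312.6803 — 5 statements merged into one kernel-verified Lean document; each statement's English description precedes it below -/
import Mathlib

section
/- Let μ and ν be Lie brackets on ℝⁿ (alternating bilinear maps ℝⁿ × ℝⁿ → ℝⁿ satisfying the Jacobi identity), and suppose ν lies in the closure of the GL(n,ℝ)-orbit {T.μ : T ∈ GL(n,ℝ)} of μ in the finite-dimensional vector space of alternating bilinear maps ℝⁿ × ℝⁿ → ℝⁿ, where (T.μ)(X,Y) = T⁻¹ μ(TX, TY). If the Lie algebra (ℝⁿ, ν) admits an inner product of negative Ricci curvature, then so does the Lie algebra (ℝⁿ, μ). -/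
open scoped BigOperators

/-- `B` is an inner product: a symmetric, positive-definite bilinear form. -/
def IsInnerProduct {V : Type*} [AddCommGroup V] [Module ℝ V]
    (B : LinearMap.BilinForm ℝ V) : Prop :=
  (∀ x y : V, B x y = B y x) ∧ (∀ x : V, x ≠ 0 → 0 < B x x)

/-- The basis `E` is orthonormal with respect to the bilinear form `B`. -/
def IsOrthonormalBasis {V : Type*} [AddCommGroup V] [Module ℝ V] {ι : Type*}
    (B : LinearMap.BilinForm ℝ V) (E : Module.Basis ι ℝ V) : Prop :=
  (∀ i, B (E i) (E i) = 1) ∧ ∀ i j, i ≠ j → B (E i) (E j) = 0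

/-- `μ` is a Lie bracket on `ℝⁿ`: an alternating bilinear map satisfying the Jacobi identity. -/
def IsLieBracketMap {n : ℕ}
    (μ : (Fin n → ℝ) →ₗ[ℝ] (Fin n → ℝ) →ₗ[ℝ] (Fin n → ℝ)) : Prop :=
  (∀ x, μ x x = 0) ∧
    (∀ x y z, μ (μ x y) z + μ (μ y z) x + μ (μ z x) y = 0)

/-- The Ricci form of the Lie algebra `(ℝⁿ, μ)` with inner product `B`, computed using the
orthonormal basis `E` and the mean curvature vector `H`. -/
noncomputable def brRicForm {n : ℕ}
    (μ : (Fin n → ℝ) →ₗ[ℝ] (Fin n → ℝ) →ₗ[ℝ] (Fin n → ℝ))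
    (B : LinearMap.BilinForm ℝ (Fin n → ℝ)) {ι : Type*} [Fintype ι]
    (E : Module.Basis ι ℝ (Fin n → ℝ)) (H X : Fin n → ℝ) : ℝ :=
  - B (μ H X) X - (1/2) * LinearMap.trace ℝ (Fin n → ℝ) ((μ X) ∘ₗ (μ X))
    - (1/2) * ∑ i, B (μ X (E i)) (μ X (E i))
    + (1/4) * ∑ i, ∑ j, (B (μ (E i) (E j)) X)^2

/-- The Lie algebra `(ℝⁿ, μ)` admits an inner product of negative Ricci curvature. -/
def BrHasNegRicci {n : ℕ}
    (μ : (Fin n → ℝ) →ₗ[ℝ] (Fin n → ℝ) →ₗ[ℝ] (Fin n → ℝ)) : Prop :=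
  ∃ B : LinearMap.BilinForm ℝ (Fin n → ℝ), IsInnerProduct B ∧
    ∀ {ι : Type} [Fintype ι] (E : Module.Basis ι ℝ (Fin n → ℝ)), IsOrthonormalBasis B E →
      ∀ H : Fin n → ℝ, (∀ X, B H X = LinearMap.trace ℝ (Fin n → ℝ) (μ X)) →
        ∀ X, X ≠ 0 → brRicForm μ B E H X < 0

namespace BrAux

variable {n : ℕ}

local notation "V" => (Fin n → ℝ)

lemma pi_expand (x : V) : x = ∑ i, x i • (Pi.single i 1 : V) := by
  funext j
  simp [Finset.sum_apply, Pi.single_apply]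

lemma nondeg {B : LinearMap.BilinForm ℝ V} (hB : IsInnerProduct B) : B.Nondegenerate := by
  constructor <;> intro m hm <;> by_contra h <;> exact (hB.2 m h).ne' (hm m)

lemma repr_eq {ι : Type*} [Fintype ι] {B : LinearMap.BilinForm ℝ V}
    (hsym : ∀ x y : V, B x y = B y x) {E : Module.Basis ι ℝ V} (hE : IsOrthonormalBasis B E)
    (v : V) (i : ι) : E.repr v i = B v (E i) := by
  classical
  conv_rhs => rw [← E.sum_repr v]
  rw [map_sum, LinearMap.sum_apply]
  rw [Finset.sum_eq_single i]
  · simp [hE.1 i]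
  · intro j _ hj
    simp [hE.2 j i hj]
  · simp

lemma trace_eq_sum {ι : Type*} [Fintype ι] {B : LinearMap.BilinForm ℝ V}
    (hsym : ∀ x y : V, B x y = B y x) {E : Module.Basis ι ℝ V} (hE : IsOrthonormalBasis B E)
    (M : V →ₗ[ℝ] V) :
    LinearMap.trace ℝ V M = ∑ i, B (M (E i)) (E i) := by
  classical
  rw [LinearMap.trace_eq_matrix_trace ℝ E, Matrix.trace]
  refine Finset.sum_congr rfl fun i _ => ?_
  rw [Matrix.diag_apply, LinearMap.toMatrix_apply, repr_eq hsym hE]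

lemma parseval {ι : Type*} [Fintype ι] {B : LinearMap.BilinForm ℝ V}
    (hsym : ∀ x y : V, B x y = B y x) {E : Module.Basis ι ℝ V} (hE : IsOrthonormalBasis B E)
    (w : V) : ∑ j, (B w (E j))^2 = B w w := by
  calc ∑ j, (B w (E j))^2 = ∑ j, E.repr w j * B w (E j) := by
        refine Finset.sum_congr rfl fun j _ => ?_
        rw [repr_eq hsym hE, sq]
      _ = B w (∑ j, E.repr w j • E j) := by
        rw [map_sum]
        simp
      _ = B w w := by rw [E.sum_repr]

noncomputable def adjB (B : LinearMap.BilinForm ℝ V) (hB : B.Nondegenerate)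
    (A : V →ₗ[ℝ] V) : V →ₗ[ℝ] V :=
  ((B.toDual hB).symm.toLinearMap) ∘ₗ A.dualMap ∘ₗ (B.toDual hB).toLinearMap

lemma toDual_symm_apply' {B : LinearMap.BilinForm ℝ V} (hB : B.Nondegenerate)
    (φ : Module.Dual ℝ V) (y : V) : B ((B.toDual hB).symm φ) y = φ y := by
  rw [← LinearMap.BilinForm.toDual_def hB, LinearEquiv.apply_symm_apply]

lemma adjB_spec {B : LinearMap.BilinForm ℝ V} (hB : B.Nondegenerate)
    (A : V →ₗ[ℝ] V) (x y : V) : B (adjB B hB A x) y = B x (A y) := by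
  simp only [adjB, LinearMap.comp_apply, LinearEquiv.coe_coe]
  rw [toDual_symm_apply' hB]
  simp [LinearMap.BilinForm.toDual_def hB]

end BrAux

namespace Stage2
variable {n : ℕ}
local notation "V" => (Fin n → ℝ)
open BrAux LinearMap


lemma sum_B_eq_trace {ι : Type*} [Fintype ι] {B : LinearMap.BilinForm ℝ V}
    (hB : B.Nondegenerate) (hsym : ∀ x y : V, B x y = B y x)
    {E : Module.Basis ι ℝ V} (hE : IsOrthonormalBasis B E) (A : V →ₗ[ℝ] V) :
    ∑ i, B (A (E i)) (A (E i)) = LinearMap.trace ℝ V ((adjB B hB A) ∘ₗ A) := by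
  rw [trace_eq_sum hsym hE]
  refine Finset.sum_congr rfl fun i _ => ?_
  rw [LinearMap.comp_apply, adjB_spec hB]

noncomputable def psiB (B : LinearMap.BilinForm ℝ V) (hB : B.Nondegenerate)
    (μ : V →ₗ[ℝ] V →ₗ[ℝ] V) (X : V) : V →ₗ[ℝ] V :=
  (B.toDual hB).symm.toLinearMap ∘ₗ ((LinearMap.llcomp ℝ V V ℝ (B X)) ∘ₗ μ)

lemma psiB_spec {B : LinearMap.BilinForm ℝ V} (hB : B.Nondegenerate)
    (hsym : ∀ x y : V, B x y = B y x) (μ : V →ₗ[ℝ] V →ₗ[ℝ] V) (X u v : V) :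
    B (psiB B hB μ X u) v = B (μ u v) X := by
  simp only [psiB, LinearMap.comp_apply, LinearEquiv.coe_coe]
  rw [toDual_symm_apply' hB]
  simp [hsym (μ u v) X]

/-- The Ricci form written in a manifestly basis-independent way. -/
lemma ric_eq {ι : Type*} [Fintype ι] {B : LinearMap.BilinForm ℝ V}
    (hB : B.Nondegenerate) (hsym : ∀ x y : V, B x y = B y x)
    {E : Module.Basis ι ℝ V} (hE : IsOrthonormalBasis B E)
    (μ : V →ₗ[ℝ] V →ₗ[ℝ] V) (H X : V) :
    brRicForm μ B E H X =
      - B (μ H X) X - (1/2) * LinearMap.trace ℝ V ((μ X) ∘ₗ (μ X))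
      - (1/2) * LinearMap.trace ℝ V ((adjB B hB (μ X)) ∘ₗ (μ X))
      + (1/4) * LinearMap.trace ℝ V ((adjB B hB (psiB B hB μ X)) ∘ₗ (psiB B hB μ X)) := by
  unfold brRicForm
  rw [sum_B_eq_trace hB hsym hE, ← sum_B_eq_trace hB hsym hE]
  congr 2
  calc ∑ i, ∑ j, (B (μ (E i) (E j)) X)^2
      = ∑ i, ∑ j, (B (psiB B hB μ X (E i)) (E j))^2 := by
        refine Finset.sum_congr rfl fun i _ => Finset.sum_congr rfl fun j _ => ?_
        rw [psiB_spec hB hsym]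
    _ = ∑ i, B (psiB B hB μ X (E i)) (psiB B hB μ X (E i)) := by
        refine Finset.sum_congr rfl fun i _ => ?_
        rw [parseval hsym hE]
    _ = LinearMap.trace ℝ V ((adjB B hB (psiB B hB μ X)) ∘ₗ (psiB B hB μ X)) :=
        sum_B_eq_trace hB hsym hE _

lemma ric_basis_indep {ι ι' : Type*} [Fintype ι] [Fintype ι']
    {B : LinearMap.BilinForm ℝ V} (hB : B.Nondegenerate)
    (hsym : ∀ x y : V, B x y = B y x)
    {E : Module.Basis ι ℝ V} (hE : IsOrthonormalBasis B E)
    {E' : Module.Basis ι' ℝ V} (hE' : IsOrthonormalBasis B E')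
    (μ : V →ₗ[ℝ] V →ₗ[ℝ] V) (H X : V) :
    brRicForm μ B E H X = brRicForm μ B E' H X := by
  rw [ric_eq hB hsym hE, ric_eq hB hsym hE']

lemma H_unique {B : LinearMap.BilinForm ℝ V} (hB : B.Nondegenerate)
    {μ : V →ₗ[ℝ] V →ₗ[ℝ] V} {H H' : V}
    (h1 : ∀ X, B H X = LinearMap.trace ℝ V (μ X))
    (h2 : ∀ X, B H' X = LinearMap.trace ℝ V (μ X)) : H = H' := by
  have h : ∀ X, B (H - H') X = 0 := by
    intro X
    simp [h1 X, h2 X]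
  exact sub_eq_zero.mp (hB.1 _ h)

lemma exists_onb (B : LinearMap.BilinForm ℝ V) (hB : IsInnerProduct B) :
    ∃ E : Module.Basis (Fin (Module.finrank ℝ V)) ℝ V, IsOrthonormalBasis B E := by
  haveI : Invertible (2:ℝ) := invertibleOfNonzero two_ne_zero
  have hsymm : LinearMap.IsSymm B :=
    LinearMap.BilinForm.isSymm_iff.mp (LinearMap.BilinForm.isSymm_def.mpr hB.1)
  obtain ⟨v, hv⟩ := LinearMap.BilinForm.exists_orthogonal_basis hsymm
  have hpos : ∀ i, 0 < B (v i) (v i) := fun i => hB.2 _ (v.ne_zero i)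
  have hs : ∀ i, Real.sqrt (B (v i) (v i)) ≠ 0 :=
    fun i => Real.sqrt_ne_zero'.mpr (hpos i)
  set w : Fin (Module.finrank ℝ V) → ℝˣ := fun i =>
    Units.mk0 (Real.sqrt (B (v i) (v i)))⁻¹ (inv_ne_zero (hs i)) with hw
  refine ⟨v.unitsSMul w, ?_, ?_⟩
  · intro i
    rw [Module.Basis.unitsSMul_apply, Units.smul_def, map_smul, map_smul]
    simp only [smul_eq_mul, hw, Units.val_mk0]
    have ht := Real.mul_self_sqrt (hpos i).le
    rw [← ht]
    field_simp
    rw [LinearMap.smul_apply, smul_eq_mul, Real.sqrt_sq (Real.sqrt_nonneg _)]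
    nth_rewrite 2 [← ht]
    field_simp
    exact div_self (hs i)
  · intro i j hij
    rw [Module.Basis.unitsSMul_apply, Module.Basis.unitsSMul_apply, Units.smul_def, Units.smul_def,
      map_smul, map_smul]
    simp only [LinearMap.smul_apply, smul_eq_mul]
    rw [hv hij, mul_zero, mul_zero]

end Stage2

namespace Stage3
variable {n : ℕ}
local notation "V" => (Fin n → ℝ)
open BrAux Stage2 LinearMap

/-- The bilinear map with structure constants `c`. -/
noncomputable def brOf (c : Fin n → Fin n → V) : V →ₗ[ℝ] V →ₗ[ℝ] V :=
  LinearMap.mk₂ ℝ (fun x y => ∑ i, ∑ j, (x i * y j) • c i j)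
    (by
      intro x x' y
      simp only [Pi.add_apply, add_mul, add_smul, Finset.sum_add_distrib])
    (by
      intro a x y
      simp only [Pi.smul_apply, smul_eq_mul, Finset.smul_sum, smul_smul, mul_assoc])
    (by
      intro x y y'
      simp only [Pi.add_apply, mul_add, add_smul, Finset.sum_add_distrib])
    (by
      intro a x y
      simp only [Pi.smul_apply, smul_eq_mul, Finset.smul_sum, smul_smul, mul_assoc,
        mul_left_comm])

@[simp] lemma brOf_apply (c : Fin n → Fin n → V) (x y : V) :
    brOf c x y = ∑ i, ∑ j, (x i * y j) • c i j := rfl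

lemma brOf_sc (g : V →ₗ[ℝ] V →ₗ[ℝ] V) :
    brOf (fun i j => g (Pi.single i 1) (Pi.single j 1)) = g := by
  refine LinearMap.ext fun x => LinearMap.ext fun y => ?_
  rw [brOf_apply]
  conv_rhs => rw [pi_expand x]
  rw [map_sum, LinearMap.sum_apply]
  refine Finset.sum_congr rfl fun i _ => ?_
  rw [map_smul, LinearMap.smul_apply]
  conv_rhs => rw [pi_expand y]
  rw [map_sum, Finset.smul_sum]
  refine Finset.sum_congr rfl fun j _ => ?_
  rw [map_smul, smul_smul, mul_smul]

/-- `brOf` as a linear map in `c`. -/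
noncomputable def bigOf : (Fin n → Fin n → V) →ₗ[ℝ] (V →ₗ[ℝ] V →ₗ[ℝ] V) where
  toFun := brOf
  map_add' c c' := by
    refine LinearMap.ext fun x => LinearMap.ext fun y => ?_
    simp [Finset.sum_add_distrib, smul_add]
  map_smul' a c := by
    refine LinearMap.ext fun x => LinearMap.ext fun y => ?_
    simp [Finset.smul_sum, smul_smul, mul_comm]

/-- The mean curvature vector of the bracket with structure constants `c`. -/
noncomputable def HcL (B : LinearMap.BilinForm ℝ V) (hB : B.Nondegenerate) :
    (Fin n → Fin n → V) →ₗ[ℝ] V :=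
  (B.toDual hB).symm.toLinearMap ∘ₗ
    (LinearMap.llcomp ℝ V (V →ₗ[ℝ] V) ℝ (LinearMap.trace ℝ V)) ∘ₗ bigOf

lemma HcL_spec (B : LinearMap.BilinForm ℝ V) (hB : B.Nondegenerate)
    (c : Fin n → Fin n → V) (X : V) :
    B (HcL B hB c) X = LinearMap.trace ℝ V (brOf c X) := by
  simp only [HcL, LinearMap.comp_apply, LinearEquiv.coe_coe]
  rw [toDual_symm_apply' hB]
  rfl

lemma cont_HcL (B : LinearMap.BilinForm ℝ V) (hB : B.Nondegenerate) :
    Continuous (HcL B hB) := (HcL B hB).continuous_of_finiteDimensional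

lemma cont_brOf {α : Type*} [TopologicalSpace α] {f : α → (Fin n → Fin n → V)}
    {g h : α → V} (hf : Continuous f) (hg : Continuous g) (hh : Continuous h) :
    Continuous fun a => brOf (f a) (g a) (h a) := by
  simp only [brOf_apply]
  refine continuous_pi fun k => ?_
  simp only [Finset.sum_apply, Pi.smul_apply, smul_eq_mul]
  refine continuous_finset_sum _ fun i _ => continuous_finset_sum _ fun j _ => ?_
  exact (((continuous_apply i).comp hg).mul ((continuous_apply j).comp hh)).mul
    ((continuous_apply k).comp (((continuous_apply j).comp ((continuous_apply i).comp hf))))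

lemma bilin_expand (B : LinearMap.BilinForm ℝ V) (x y : V) :
    B x y = ∑ i, ∑ j, x i * y j * B (Pi.single i 1) (Pi.single j 1) := by
  conv_lhs => rw [pi_expand x]
  rw [map_sum, LinearMap.sum_apply]
  refine Finset.sum_congr rfl fun i _ => ?_
  rw [map_smul, LinearMap.smul_apply]
  conv_lhs => rw [pi_expand y]
  rw [map_sum, Finset.smul_sum]
  refine Finset.sum_congr rfl fun j _ => ?_
  rw [map_smul]
  simp [smul_eq_mul]
  ring

lemma cont_B {α : Type*} [TopologicalSpace α] (B : LinearMap.BilinForm ℝ V)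
    {g h : α → V} (hg : Continuous g) (hh : Continuous h) :
    Continuous fun a => B (g a) (h a) := by
  have hexp : (fun a => B (g a) (h a))
      = fun a => ∑ i, ∑ j, g a i * h a j * B (Pi.single i 1) (Pi.single j 1) :=
    funext fun a => bilin_expand B _ _
  rw [hexp]
  refine continuous_finset_sum _ fun i _ => continuous_finset_sum _ fun j _ => ?_
  exact (((continuous_apply i).comp hg).mul ((continuous_apply j).comp hh)).mul
    continuous_const

end Stage3

namespace Stage4
variable {n : ℕ}
local notation "V" => (Fin n → ℝ)
open BrAux Stage2 Stage3 LinearMap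

lemma cont_F {ι : Type*} [Fintype ι] (B : LinearMap.BilinForm ℝ V) (hnd : B.Nondegenerate)
    (hsym : ∀ x y : V, B x y = B y x) {E₀ : Module.Basis ι ℝ V} (hE₀ : IsOrthonormalBasis B E₀) :
    Continuous fun p : (Fin n → Fin n → V) × V =>
      brRicForm (brOf p.1) B E₀ (HcL B hnd p.1) p.2 := by
  have hrw : ∀ p : (Fin n → Fin n → V) × V,
      brRicForm (brOf p.1) B E₀ (HcL B hnd p.1) p.2 =
      - B (brOf p.1 (HcL B hnd p.1) p.2) p.2
      - (1/2) * ∑ i, B (brOf p.1 p.2 (brOf p.1 p.2 (E₀ i))) (E₀ i)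
      - (1/2) * ∑ i, B (brOf p.1 p.2 (E₀ i)) (brOf p.1 p.2 (E₀ i))
      + (1/4) * ∑ i, ∑ j, (B (brOf p.1 (E₀ i) (E₀ j)) p.2)^2 := by
    intro p
    unfold brRicForm
    rw [trace_eq_sum hsym hE₀]
    simp [LinearMap.comp_apply]
  simp only [hrw]
  have hc : Continuous fun p : (Fin n → Fin n → V) × V => p.1 := continuous_fst
  have hx : Continuous fun p : (Fin n → Fin n → V) × V => p.2 := continuous_snd
  have hH : Continuous fun p : (Fin n → Fin n → V) × V => HcL B hnd p.1 :=
    (cont_HcL B hnd).comp hc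
  refine Continuous.add (Continuous.sub (Continuous.sub ?_ ?_) ?_) ?_
  · exact (cont_B B (cont_brOf hc hH hx) hx).neg
  · exact continuous_const.mul (continuous_finset_sum _ fun i _ =>
      cont_B B (cont_brOf hc hx (cont_brOf hc hx continuous_const)) continuous_const)
  · exact continuous_const.mul (continuous_finset_sum _ fun i _ =>
      cont_B B (cont_brOf hc hx continuous_const) (cont_brOf hc hx continuous_const))
  · exact continuous_const.mul (continuous_finset_sum _ fun i _ =>
      continuous_finset_sum _ fun j _ =>
        (cont_B B (cont_brOf hc continuous_const continuous_const) hx).pow 2)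

lemma F_hom (B : LinearMap.BilinForm ℝ V) {ι : Type*} [Fintype ι] (E₀ : Module.Basis ι ℝ V)
    (μ : V →ₗ[ℝ] V →ₗ[ℝ] V) (H : V) (t : ℝ) (X : V) :
    brRicForm μ B E₀ H (t • X) = t^2 * brRicForm μ B E₀ H X := by
  unfold brRicForm
  have h2 : μ (t • X) = t • μ X := map_smul _ _ _
  rw [h2]
  simp only [map_smul, LinearMap.smul_apply, smul_eq_mul, LinearMap.smul_comp,
    LinearMap.comp_smul, smul_smul, Finset.mul_sum]
  have e3 : ∑ i, (1:ℝ)/2 * (t * (t * (B ((μ X) (E₀ i))) ((μ X) (E₀ i))))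
      = t^2 * ∑ i, (1:ℝ)/2 * ((B ((μ X) (E₀ i))) ((μ X) (E₀ i))) := by
    rw [Finset.mul_sum]
    exact Finset.sum_congr rfl fun i _ => by ring
  have e4 : ∑ i, ∑ j, (1:ℝ)/4 * (t * (B ((μ (E₀ i)) (E₀ j))) X)^2
      = t^2 * ∑ i, ∑ j, (1:ℝ)/4 * ((B ((μ (E₀ i)) (E₀ j))) X)^2 := by
    rw [Finset.mul_sum]
    exact Finset.sum_congr rfl fun i _ => by
      rw [Finset.mul_sum]
      exact Finset.sum_congr rfl fun j _ => by ring
  rw [e3, e4]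
  ring

end Stage4

namespace Stage5
variable {n : ℕ}
local notation "V" => (Fin n → ℝ)
open BrAux Stage2 Stage3 LinearMap

/-- The conjugated bracket `g = T.μ`. -/
noncomputable def conjBr (μ : V →ₗ[ℝ] V →ₗ[ℝ] V) (T : V ≃ₗ[ℝ] V) : V →ₗ[ℝ] V →ₗ[ℝ] V :=
  (μ.compl₁₂ T.toLinearMap T.toLinearMap).compr₂ T.symm.toLinearMap

@[simp] lemma conjBr_apply (μ : V →ₗ[ℝ] V →ₗ[ℝ] V) (T : V ≃ₗ[ℝ] V) (x y : V) :
    conjBr μ T x y = T.symm (μ (T x) (T y)) := rfl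

/-- The pulled-back inner product. -/
noncomputable def pullB (B : LinearMap.BilinForm ℝ V) (T : V ≃ₗ[ℝ] V) :
    LinearMap.BilinForm ℝ V :=
  B.compl₁₂ T.symm.toLinearMap T.symm.toLinearMap

@[simp] lemma pullB_apply (B : LinearMap.BilinForm ℝ V) (T : V ≃ₗ[ℝ] V) (x y : V) :
    pullB B T x y = B (T.symm x) (T.symm y) := rfl

lemma conjBr_comp (μ : V →ₗ[ℝ] V →ₗ[ℝ] V) (T : V ≃ₗ[ℝ] V) (X : V) :
    conjBr μ T (T.symm X) = (T.symm : V ≃ₗ[ℝ] V).conj (μ X) := by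
  refine LinearMap.ext fun z => ?_
  simp [LinearEquiv.conj_apply, LinearEquiv.apply_symm_apply]

lemma ric_conj (B : LinearMap.BilinForm ℝ V) (μ : V →ₗ[ℝ] V →ₗ[ℝ] V) (T : V ≃ₗ[ℝ] V)
    {ι : Type*} [Fintype ι] (E : Module.Basis ι ℝ V) (H X : V) :
    brRicForm μ (pullB B T) E H X =
      brRicForm (conjBr μ T) B (E.map T.symm) (T.symm H) (T.symm X) := by
  unfold brRicForm
  have e1 : B (conjBr μ T (T.symm H) (T.symm X)) (T.symm X)
      = pullB B T (μ H X) X := by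
    simp [LinearEquiv.apply_symm_apply]
  have e2 : LinearMap.trace ℝ V ((conjBr μ T (T.symm X)) ∘ₗ (conjBr μ T (T.symm X)))
      = LinearMap.trace ℝ V ((μ X) ∘ₗ (μ X)) := by
    rw [conjBr_comp]
    rw [show ((T.symm : V ≃ₗ[ℝ] V).conj (μ X)) ∘ₗ ((T.symm : V ≃ₗ[ℝ] V).conj (μ X))
        = (T.symm : V ≃ₗ[ℝ] V).conj ((μ X) ∘ₗ (μ X)) from ?_]
    · rw [LinearMap.trace_conj']
    · refine LinearMap.ext fun z => ?_
      simp [LinearEquiv.conj_apply, LinearEquiv.apply_symm_apply]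
  have e3 : ∀ i, B (conjBr μ T (T.symm X) ((E.map T.symm) i))
        (conjBr μ T (T.symm X) ((E.map T.symm) i))
      = pullB B T (μ X (E i)) (μ X (E i)) := by
    intro i
    simp [Module.Basis.map_apply, LinearEquiv.apply_symm_apply]
  have e4 : ∀ i j, (B (conjBr μ T ((E.map T.symm) i) ((E.map T.symm) j)) (T.symm X))^2
      = ((pullB B T) (μ (E i) (E j)) X)^2 := by
    intro i j
    simp [Module.Basis.map_apply, LinearEquiv.apply_symm_apply]
  rw [e1, e2]
  congr 1
  · congr 1
    congr 1
    exact Finset.sum_congr rfl fun i _ => (e3 i).symm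
  · congr 1
    exact Finset.sum_congr rfl fun i _ => Finset.sum_congr rfl fun j _ => (e4 i j).symm

lemma H_transfer (B : LinearMap.BilinForm ℝ V) (μ : V →ₗ[ℝ] V →ₗ[ℝ] V) (T : V ≃ₗ[ℝ] V)
    (H : V) (hH : ∀ X, pullB B T H X = LinearMap.trace ℝ V (μ X)) :
    ∀ Y, B (T.symm H) Y = LinearMap.trace ℝ V (conjBr μ T Y) := by
  intro Y
  have h1 : B (T.symm H) Y = pullB B T H (T Y) := by
    simp [LinearEquiv.symm_apply_apply]
  rw [h1, hH (T Y)]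
  have h2 : conjBr μ T Y = (T.symm : V ≃ₗ[ℝ] V).conj (μ (T Y)) := by
    have := conjBr_comp μ T (T Y)
    rwa [LinearEquiv.symm_apply_apply] at this
  rw [h2, LinearMap.trace_conj']

lemma pullB_inner (B : LinearMap.BilinForm ℝ V) (hB : IsInnerProduct B) (T : V ≃ₗ[ℝ] V) :
    IsInnerProduct (pullB B T) := by
  constructor
  · intro x y
    simp [hB.1 (T.symm x) (T.symm y)]
  · intro x hx
    have : T.symm x ≠ 0 := fun h => hx (by
      have := congrArg T h
      simpa using this)
    simpa using hB.2 _ this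

lemma pullB_onb (B : LinearMap.BilinForm ℝ V) (T : V ≃ₗ[ℝ] V)
    {ι : Type*} [Fintype ι] {E : Module.Basis ι ℝ V} (hE : IsOrthonormalBasis (pullB B T) E) :
    IsOrthonormalBasis B (E.map T.symm) := by
  constructor
  · intro i
    have := hE.1 i
    simpa [Module.Basis.map_apply] using this
  · intro i j hij
    have := hE.2 i j hij
    simpa [Module.Basis.map_apply] using this

end Stage5

/-- If a Lie bracket `ν` on `ℝⁿ` lies in the closure of the `GL(n,ℝ)`-orbit
`{T.μ}` of a Lie bracket `μ`, where `(T.μ)(X,Y) = T⁻¹ μ(TX, TY)`, and `(ℝⁿ, ν)` admits an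
inner product of negative Ricci curvature, then so does `(ℝⁿ, μ)`. -/
theorem brHasNegRicci_of_orbit_closure (n : ℕ)
    (μ ν : (Fin n → ℝ) →ₗ[ℝ] (Fin n → ℝ) →ₗ[ℝ] (Fin n → ℝ))
    (hμ : IsLieBracketMap μ) (hν : IsLieBracketMap ν)
    (hclo : (fun x y => ν x y) ∈
      closure {f : (Fin n → ℝ) → (Fin n → ℝ) → (Fin n → ℝ) |
        ∃ T : (Fin n → ℝ) ≃ₗ[ℝ] (Fin n → ℝ), f = fun x y => T.symm (μ (T x) (T y))})
    (hneg : BrHasNegRicci ν) :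
    BrHasNegRicci μ := by

  classical
  obtain ⟨B, hBip, hforall⟩ := hneg
  have hsym := hBip.1
  have hnd : B.Nondegenerate := BrAux.nondeg hBip
  obtain ⟨E₀, hE₀⟩ := Stage2.exists_onb B hBip
  set c₀ : Fin n → Fin n → (Fin n → ℝ) :=
    fun i j => ν (Pi.single i 1) (Pi.single j 1) with hc₀def
  have hbr0 : Stage3.brOf c₀ = ν := Stage3.brOf_sc ν
  have hF := Stage4.cont_F B hnd hsym hE₀
  have hneg0 : ∀ X : Fin n → ℝ, X ≠ 0 →
      brRicForm (Stage3.brOf c₀) B E₀ (Stage3.HcL B hnd c₀) X < 0 := by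
    intro X hX
    have hHspec : ∀ Y, B (Stage3.HcL B hnd c₀) Y
        = LinearMap.trace ℝ (Fin n → ℝ) (ν Y) := by
      intro Y
      rw [Stage3.HcL_spec, hbr0]
    have := hforall E₀ hE₀ (Stage3.HcL B hnd c₀) hHspec X hX
    rw [hbr0]
    exact this
  have hev : ∀ᶠ c in nhds c₀, ∀ X ∈ Metric.sphere (0 : Fin n → ℝ) 1,
      brRicForm (Stage3.brOf c) B E₀ (Stage3.HcL B hnd c) X < 0 := by
    refine (isCompact_sphere (0 : Fin n → ℝ) 1).eventually_forall_of_forall_eventually ?_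
    intro X hX
    have hX0 : X ≠ 0 := by
      intro h
      rw [h] at hX
      simp at hX
    have hlt := hneg0 X hX0
    have h2 := (hF.tendsto (c₀, X)).eventually (eventually_lt_nhds hlt)
    exact h2.mono fun z hz => hz
  have hsc_cont : Continuous (fun f : (Fin n → ℝ) → (Fin n → ℝ) → (Fin n → ℝ) =>
      (fun i j => f (Pi.single i 1) (Pi.single j 1) : Fin n → Fin n → (Fin n → ℝ))) := by
    refine continuous_pi fun i => continuous_pi fun j => ?_
    exact (continuous_apply (Pi.single j 1)).comp (continuous_apply (Pi.single i 1))
  have hcl : c₀ ∈ closure ((fun f : (Fin n → ℝ) → (Fin n → ℝ) → (Fin n → ℝ) =>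
      (fun i j => f (Pi.single i 1) (Pi.single j 1) : Fin n → Fin n → (Fin n → ℝ))) ''
      {f : (Fin n → ℝ) → (Fin n → ℝ) → (Fin n → ℝ) |
        ∃ T : (Fin n → ℝ) ≃ₗ[ℝ] (Fin n → ℝ), f = fun x y => T.symm (μ (T x) (T y))}) :=
    map_mem_closure hsc_cont hclo (Set.mapsTo_image _ _)
  obtain ⟨c₁, hc₁, himg⟩ := mem_closure_iff_nhds.mp hcl _ hev
  obtain ⟨f, ⟨T, rfl⟩, hsc_f⟩ := himg
  have hbr1 : Stage3.brOf c₁ = Stage5.conjBr μ T := by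
    rw [← hsc_f]
    exact Stage3.brOf_sc (Stage5.conjBr μ T)
  have hgneg : ∀ X : Fin n → ℝ, X ≠ 0 →
      brRicForm (Stage5.conjBr μ T) B E₀ (Stage3.HcL B hnd c₁) X < 0 := by
    intro X hX
    have hnorm : ‖X‖ ≠ 0 := norm_ne_zero_iff.mpr hX
    have hu : ‖X‖⁻¹ • X ∈ Metric.sphere (0 : Fin n → ℝ) 1 := by
      simp [norm_smul, abs_of_nonneg (inv_nonneg.mpr (norm_nonneg X)),
        inv_mul_cancel₀ hnorm]
    have h1 := hc₁ _ hu
    have h2 : brRicForm (Stage3.brOf c₁) B E₀ (Stage3.HcL B hnd c₁) X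
        = ‖X‖^2 * brRicForm (Stage3.brOf c₁) B E₀ (Stage3.HcL B hnd c₁) (‖X‖⁻¹ • X) := by
      rw [← Stage4.F_hom, smul_smul, mul_inv_cancel₀ hnorm, one_smul]
    have h3 : brRicForm (Stage3.brOf c₁) B E₀ (Stage3.HcL B hnd c₁) X < 0 := by
      rw [h2]
      exact mul_neg_of_pos_of_neg (by positivity) h1
    rw [← hbr1]
    exact h3
  refine ⟨Stage5.pullB B T, Stage5.pullB_inner B hBip T, ?_⟩
  intro ι _ E hE H hH X hX
  rw [Stage5.ric_conj B μ T E H X]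
  have hE' := Stage5.pullB_onb B T hE
  have hH' := Stage5.H_transfer B μ T H hH
  have hHc : ∀ Y, B (Stage3.HcL B hnd c₁) Y
      = LinearMap.trace ℝ (Fin n → ℝ) (Stage5.conjBr μ T Y) := by
    intro Y
    rw [Stage3.HcL_spec, hbr1]
  have hHeq : T.symm H = Stage3.HcL B hnd c₁ := Stage2.H_unique hnd hH' hHc
  rw [hHeq, Stage2.ric_basis_indep hnd hsym hE' hE₀]
  refine hgneg _ ?_
  intro h
  apply hX
  have := congrArg T h
  simpa using this
end

section
/- Let p ≥ 1 and let D be a derivation of the Heisenberg Lie algebra h_{2p+1} such that D(Z) = λ·Z with λ > 0. Let V_− ⊆ (h_{2p+1})^ℂ be the sum of the generalized eigenspaces of the complexification of D corresponding to eigenvalues with negative real part, and let m_− = V_− ∩ h_{2p+1}. Then [U, V] = 0 for all U, V ∈ V_−; in particular [X, Y] = 0 for all X, Y ∈ m_−. -/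
open scoped TensorProduct

/-- Let `D` be a derivation of the Heisenberg Lie algebra `h_{2p+1}` with
`D Z = λ·Z`, `λ > 0`. Let `V₋` be the sum of the generalized eigenspaces of the
complexification of `D` for the eigenvalues with negative real part. Then `[U, V] = 0` for all
`U, V ∈ V₋`; in particular `[X, Y] = 0` for `X, Y ∈ m₋ = V₋ ∩ h_{2p+1}`. -/
theorem heisenberg_neg_part_abelian
    (L : Type*) [LieRing L] [LieAlgebra ℝ L]
    (p : ℕ) (hp : 1 ≤ p) (Xb : Fin (2 * p) → L) (Zb : L)
    (hindep : LinearIndependent ℝ (Sum.elim Xb (fun _ : Unit => Zb)))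
    (hspan : Submodule.span ℝ (Set.range (Sum.elim Xb (fun _ : Unit => Zb))) = ⊤)
    (hbr : ∀ i j : Fin (2 * p), ⁅Xb i, Xb j⁆ =
      if (j : ℕ) = (i : ℕ) + p then Zb else if (i : ℕ) = (j : ℕ) + p then -Zb else 0)
    (hXZ : ∀ i, ⁅Xb i, Zb⁆ = 0)
    (D : LieDerivation ℝ L L) (lam : ℝ) (hDZ : D Zb = lam • Zb) (hlam : 0 < lam)
    (Vneg : Submodule ℂ (ℂ ⊗[ℝ] L))
    (hVneg : Vneg = ⨆ μ : {μ : ℂ // μ.re < 0},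
      Module.End.maxGenEigenspace (LinearMap.baseChange ℂ D.toLinearMap) μ.1) :
    (∀ U ∈ Vneg, ∀ W ∈ Vneg, ⁅U, W⁆ = 0) ∧
      (∀ x y : L, (1 : ℂ) ⊗ₜ[ℝ] x ∈ Vneg → (1 : ℂ) ⊗ₜ[ℝ] y ∈ Vneg → ⁅x, y⁆ = 0) := by
  set DC : Module.End ℂ (ℂ ⊗[ℝ] L) := LinearMap.baseChange ℂ D.toLinearMap with hDCdef
  -- local bracket lemmas for the tensor product (stated with the right instances)
  have cl_add : ∀ U W V : ℂ ⊗[ℝ] L, ⁅U, W + V⁆ = ⁅U, W⁆ + ⁅U, V⁆ := fun U W V => lie_add U W V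
  have cl_add' : ∀ U W V : ℂ ⊗[ℝ] L, ⁅U + W, V⁆ = ⁅U, V⁆ + ⁅W, V⁆ := fun U W V => add_lie U W V
  have cl_zero : ∀ U : ℂ ⊗[ℝ] L, ⁅U, (0 : ℂ ⊗[ℝ] L)⁆ = 0 := fun U => lie_zero U
  have cl_zero' : ∀ W : ℂ ⊗[ℝ] L, ⁅(0 : ℂ ⊗[ℝ] L), W⁆ = 0 := fun W => zero_lie W
  have cl_sub : ∀ U W V : ℂ ⊗[ℝ] L, ⁅U, W - V⁆ = ⁅U, W⁆ - ⁅U, V⁆ := fun U W V => lie_sub U W V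
  have cl_sub' : ∀ U W V : ℂ ⊗[ℝ] L, ⁅U - W, V⁆ = ⁅U, V⁆ - ⁅W, V⁆ := fun U W V => sub_lie U W V
  have cl_smul : ∀ (c : ℂ) (U W : ℂ ⊗[ℝ] L), ⁅U, c • W⁆ = c • ⁅U, W⁆ :=
    fun c U W => lie_smul c U W
  have cl_smul' : ∀ (c : ℂ) (U W : ℂ ⊗[ℝ] L), ⁅c • U, W⁆ = c • ⁅U, W⁆ :=
    fun c U W => smul_lie c U W
  -- every element of L is in the span of the basis
  have hmemspan : ∀ x : L, x ∈ Submodule.span ℝ (Set.range (Sum.elim Xb fun _ : Unit => Zb)) := by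
    intro x; rw [hspan]; trivial
  -- brackets with Zb vanish
  have hZZ : ∀ x : L, ⁅x, Zb⁆ = 0 := by
    intro x
    induction hmemspan x using Submodule.span_induction with
    | mem x hx =>
      obtain ⟨u, rfl⟩ := hx
      cases u with
      | inl i => exact hXZ i
      | inr u => exact lie_self Zb
    | zero => simp
    | add x y hx hy ihx ihy => rw [add_lie, ihx, ihy, add_zero]
    | smul a x hx ihx => rw [smul_lie, ihx, smul_zero]
  have hZZ' : ∀ x : L, ⁅Zb, x⁆ = 0 := by
    intro x; rw [← lie_skew, hZZ, neg_zero]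
  -- all brackets in L land in the span of Zb
  have hbrspan : ∀ x y : L, ⁅x, y⁆ ∈ Submodule.span ℝ {Zb} := by
    intro x y
    induction hmemspan x using Submodule.span_induction with
    | mem x hx =>
      obtain ⟨u, rfl⟩ := hx
      cases u with
      | inr u =>
        simp only [Sum.elim_inr, hZZ']
        exact Submodule.zero_mem _
      | inl i =>
        simp only [Sum.elim_inl]
        induction hmemspan y using Submodule.span_induction with
        | mem y hy =>
          obtain ⟨v, rfl⟩ := hy
          cases v with
          | inl j =>
            simp only [Sum.elim_inl, hbr i j]
            split_ifs
            · exact Submodule.mem_span_singleton_self Zb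
            · exact Submodule.neg_mem _ (Submodule.mem_span_singleton_self Zb)
            · exact Submodule.zero_mem _
          | inr v =>
            simp only [Sum.elim_inr, hXZ i]
            exact Submodule.zero_mem _
        | zero => simp only [lie_zero]; exact Submodule.zero_mem _
        | add y z hy hz ihy ihz =>
          rw [lie_add]; exact Submodule.add_mem _ ihy ihz
        | smul a y hy ihy =>
          rw [lie_smul]; exact Submodule.smul_mem _ a ihy
    | zero => simp only [zero_lie]; exact Submodule.zero_mem _
    | add x z hx hz ihx ihz => rw [add_lie]; exact Submodule.add_mem _ ihx ihz
    | smul a x hx ihx => rw [smul_lie]; exact Submodule.smul_mem _ a ihx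
  -- all brackets in ℂ ⊗ L land in the ℂ-span of 1 ⊗ Zb
  have hbrspanC : ∀ U W : ℂ ⊗[ℝ] L, ⁅U, W⁆ ∈ Submodule.span ℂ {(1 : ℂ) ⊗ₜ[ℝ] Zb} := by
    intro U W
    induction U using TensorProduct.induction_on with
    | zero => rw [cl_zero']; exact Submodule.zero_mem _
    | add U₁ U₂ ih₁ ih₂ => rw [cl_add']; exact Submodule.add_mem _ ih₁ ih₂
    | tmul a x =>
      induction W using TensorProduct.induction_on with
      | zero => rw [cl_zero]; exact Submodule.zero_mem _
      | add W₁ W₂ ih₁ ih₂ => rw [cl_add]; exact Submodule.add_mem _ ih₁ ih₂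
      | tmul b y =>
        rw [LieAlgebra.ExtendScalars.bracket_tmul]
        obtain ⟨c, hc⟩ := Submodule.mem_span_singleton.mp (hbrspan x y)
        rw [← hc, TensorProduct.tmul_smul]
        have h1 : (a * b) ⊗ₜ[ℝ] Zb = (a * b) • ((1 : ℂ) ⊗ₜ[ℝ] Zb) := by
          rw [TensorProduct.smul_tmul', smul_eq_mul, mul_one]
        rw [h1]
        exact Submodule.smul_of_tower_mem _ c
          (Submodule.smul_mem _ _ (Submodule.mem_span_singleton_self _))
  -- DC acts on 1 ⊗ Zb with eigenvalue lam
  have hDCZ : DC ((1 : ℂ) ⊗ₜ[ℝ] Zb) = (lam : ℂ) • ((1 : ℂ) ⊗ₜ[ℝ] Zb) := by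
    rw [hDCdef, LinearMap.baseChange_tmul]
    rw [LieDerivation.coeFn_coe, hDZ, TensorProduct.tmul_smul,
      ← algebraMap_smul ℂ lam ((1 : ℂ) ⊗ₜ[ℝ] Zb), Complex.coe_algebraMap]
  -- the Leibniz rule for DC
  have hLeib : ∀ U W : ℂ ⊗[ℝ] L, DC ⁅U, W⁆ = ⁅DC U, W⁆ + ⁅U, DC W⁆ := by
    intro U W
    induction U using TensorProduct.induction_on with
    | zero => simp only [cl_zero', map_zero, zero_add, add_zero]
    | add U₁ U₂ ih₁ ih₂ =>
      rw [cl_add', map_add, ih₁, ih₂, map_add, cl_add', cl_add']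
      abel
    | tmul a x =>
      induction W using TensorProduct.induction_on with
      | zero => simp only [cl_zero, map_zero, zero_add, add_zero]
      | add W₁ W₂ ih₁ ih₂ =>
        rw [cl_add, map_add, ih₁, ih₂, map_add, cl_add, cl_add]
        abel
      | tmul b y =>
        rw [LieAlgebra.ExtendScalars.bracket_tmul, hDCdef, LinearMap.baseChange_tmul,
          LinearMap.baseChange_tmul, LinearMap.baseChange_tmul]
        rw [LieDerivation.coeFn_coe, D.apply_lie_eq_add x y, TensorProduct.tmul_add,
          LieAlgebra.ExtendScalars.bracket_tmul, LieAlgebra.ExtendScalars.bracket_tmul, add_comm]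
  -- key identity
  have hkey : ∀ U W : ℂ ⊗[ℝ] L, ⁅DC U, W⁆ + ⁅U, DC W⁆ = (lam : ℂ) • ⁅U, W⁆ := by
    intro U W
    rw [← hLeib]
    obtain ⟨c, hc⟩ := Submodule.mem_span_singleton.mp (hbrspanC U W)
    rw [← hc, map_smul, hDCZ, smul_comm]
  -- main induction
  have main : ∀ N : ℕ, ∀ μ ν : ℂ, (lam : ℂ) - μ - ν ≠ 0 → ∀ m n : ℕ, m + n ≤ N →
      ∀ U W : ℂ ⊗[ℝ] L, ((DC - μ • 1) ^ m) U = 0 → ((DC - ν • 1) ^ n) W = 0 → ⁅U, W⁆ = 0 := by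
    intro N
    induction N with
    | zero =>
      intro μ ν hμν m n hmn U W hU hW
      have hm : m = 0 := by omega
      subst hm
      simp only [pow_zero, Module.End.one_apply] at hU
      rw [hU, cl_zero']
    | succ N ih =>
      intro μ ν hμν m n hmn U W hU hW
      match m, n with
      | 0, n =>
        simp only [pow_zero, Module.End.one_apply] at hU
        rw [hU, cl_zero']
      | m + 1, 0 =>
        simp only [pow_zero, Module.End.one_apply] at hW
        rw [hW, cl_zero]
      | m + 1, n + 1 =>
        have h1 : ⁅(DC - μ • 1) U, W⁆ = 0 := by
          refine ih μ ν hμν m (n + 1) (by omega) _ W ?_ hW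
          rw [← Module.End.mul_apply, ← pow_succ]
          exact hU
        have h2 : ⁅U, (DC - ν • 1) W⁆ = 0 := by
          refine ih μ ν hμν (m + 1) n (by omega) U _ hU ?_
          rw [← Module.End.mul_apply, ← pow_succ]
          exact hW
        have hexp : ((lam : ℂ) - μ - ν) • ⁅U, W⁆ = ⁅(DC - μ • 1) U, W⁆ + ⁅U, (DC - ν • 1) W⁆ := by
          simp only [LinearMap.sub_apply, LinearMap.smul_apply, Module.End.one_apply]
          rw [cl_sub', cl_sub, cl_smul', cl_smul, sub_smul, sub_smul, ← hkey U W]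
          abel
        rw [h1, h2, add_zero] at hexp
        exact (smul_eq_zero.mp hexp).resolve_left hμν
  have part1 : ∀ U ∈ Vneg, ∀ W ∈ Vneg, ⁅U, W⁆ = 0 := by
    intro U hU W hW
    rw [hVneg] at hU hW
    induction hU using Submodule.iSup_induction' with
    | mem μ U hUμ =>
      induction hW using Submodule.iSup_induction' with
      | mem ν W hWν =>
        obtain ⟨m, hm⟩ := (Module.End.mem_maxGenEigenspace _ _ _).mp hUμ
        obtain ⟨n, hn⟩ := (Module.End.mem_maxGenEigenspace _ _ _).mp hWν
        have hμν : (lam : ℂ) - μ.1 - ν.1 ≠ 0 := by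
          intro h
          have hre := congrArg Complex.re h
          simp only [Complex.sub_re, Complex.ofReal_re, Complex.zero_re] at hre
          have h1 := μ.2
          have h2 := ν.2
          linarith
        exact main (m + n) μ.1 ν.1 hμν m n le_rfl U W hm hn
      | zero => rw [cl_zero]
      | add W₁ hW₁ W₂ hW₂ ih₁ ih₂ => rw [cl_add, ih₁, ih₂, add_zero]
    | zero => rw [cl_zero']
    | add U₁ hU₁ U₂ hU₂ ih₁ ih₂ => rw [cl_add', ih₁, ih₂, add_zero]
  refine ⟨part1, ?_⟩
  intro x y hx hy
  have h0 : ⁅(1 : ℂ) ⊗ₜ[ℝ] x, (1 : ℂ) ⊗ₜ[ℝ] y⁆ = 0 := part1 _ hx _ hy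
  rw [LieAlgebra.ExtendScalars.bracket_tmul, one_mul] at h0
  have h1 := congrArg ((TensorProduct.lid ℝ L).toLinearMap ∘ₗ
    LinearMap.rTensor L Complex.reLm) h0
  simpa using h1
end

section
/- Let (m, ⟨·,·⟩) be a finite-dimensional real inner product space, K a skew-symmetric endomorphism of m (⟨Kx,y⟩ = −⟨x,Ky⟩ for all x,y), and W ⊆ m a subspace such that ⟨Kx, y⟩ = 0 for all x, y ∈ W. Let π_W denote the orthogonal projection of m onto W. Then Tr(Kᵀ K π_W) ≤ (1/2)·Tr(Kᵀ K), where Kᵀ is the adjoint of K with respect to ⟨·,·⟩. -/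
open scoped RealInnerProductSpace

open LinearMap Finset in
private lemma trace_eq_sum_inner' {E : Type*} [NormedAddCommGroup E] [InnerProductSpace ℝ E]
    {ι : Type*} [Fintype ι] [DecidableEq ι] (b : OrthonormalBasis ι ℝ E) (f : E →ₗ[ℝ] E) :
    LinearMap.trace ℝ E f = ∑ i, ⟪b i, f (b i)⟫ := by
  rw [LinearMap.trace_eq_matrix_trace ℝ b.toBasis, Matrix.trace]
  congr 1
  ext i
  rw [Matrix.diag_apply, LinearMap.toMatrix_apply, OrthonormalBasis.coe_toBasis,
    OrthonormalBasis.coe_toBasis_repr_apply, OrthonormalBasis.repr_apply_apply]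

/-- Let `K` be a skew-symmetric endomorphism of a finite-dimensional real
inner product space `m` and `W ⊆ m` a subspace with `⟨Kx, y⟩ = 0` for all `x, y ∈ W`. Then
`Tr(Kᵀ K π_W) ≤ (1/2)·Tr(Kᵀ K)`. -/
theorem trace_skew_proj_le
    (m : Type*) [NormedAddCommGroup m] [InnerProductSpace ℝ m] [FiniteDimensional ℝ m]
    (K : m →ₗ[ℝ] m) (hK : ∀ x y : m, ⟪K x, y⟫ = - ⟪x, K y⟫)
    (W : Submodule ℝ m) (hW : ∀ x ∈ W, ∀ y ∈ W, ⟪K x, y⟫ = 0) :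
    LinearMap.trace ℝ m
        ((LinearMap.adjoint K) ∘ₗ K ∘ₗ (W.subtype ∘ₗ (W.orthogonalProjection).toLinearMap))
      ≤ (1/2) * LinearMap.trace ℝ m ((LinearMap.adjoint K) ∘ₗ K) := by
  classical
  set e := stdOrthonormalBasis ℝ W with he
  set f := stdOrthonormalBasis ℝ Wᗮ with hf
  -- trace over a subspace computation, in general form
  have key : ∀ (U : Submodule ℝ m) (b : OrthonormalBasis (Fin (Module.finrank ℝ U)) ℝ U),
      LinearMap.trace ℝ m
          ((LinearMap.adjoint K) ∘ₗ K ∘ₗ (U.subtype ∘ₗ (U.orthogonalProjection).toLinearMap))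
        = ∑ i, ‖K (b i : m)‖ ^ 2 := by
    intro U b
    have hcomp : (LinearMap.adjoint K) ∘ₗ K ∘ₗ (U.subtype ∘ₗ (U.orthogonalProjection).toLinearMap)
        = ((LinearMap.adjoint K) ∘ₗ K ∘ₗ U.subtype) ∘ₗ (U.orthogonalProjection).toLinearMap := by
      ext x; rfl
    rw [hcomp, LinearMap.trace_comp_comm', trace_eq_sum_inner' b]
    congr 1
    ext i
    simp only [LinearMap.comp_apply, ContinuousLinearMap.coe_coe, Submodule.subtype_apply]
    rw [Submodule.inner_orthogonalProjectionOnto_eq_of_mem_left, LinearMap.adjoint_inner_right,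
      real_inner_self_eq_norm_sq]
  have hTW := key W e
  have hTO := key Wᗮ f
  -- decomposition of the full trace
  have hdecomp : (LinearMap.adjoint K) ∘ₗ K
      = ((LinearMap.adjoint K) ∘ₗ K ∘ₗ (W.subtype ∘ₗ (W.orthogonalProjection).toLinearMap))
        + ((LinearMap.adjoint K) ∘ₗ K ∘ₗ (Wᗮ.subtype ∘ₗ (Wᗮ.orthogonalProjection).toLinearMap)) := by
    ext x
    have hx : ((W.orthogonalProjection x : W) : m) + ((Wᗮ.orthogonalProjection x : Wᗮ) : m) = x :=
      Submodule.starProjection_add_starProjection_orthogonal (K := W) x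
    simp only [LinearMap.add_apply, LinearMap.comp_apply, ContinuousLinearMap.coe_coe,
      Submodule.subtype_apply]
    rw [← map_add, ← map_add, hx]
  have htr : LinearMap.trace ℝ m ((LinearMap.adjoint K) ∘ₗ K)
      = (∑ i, ‖K (e i : m)‖ ^ 2) + ∑ j, ‖K (f j : m)‖ ^ 2 := by
    rw [hdecomp, map_add, hTW, hTO]
  rw [hTW, htr]
  -- it suffices to show ∑ ‖K e i‖² ≤ ∑ ‖K f j‖²
  have main : (∑ i, ‖K (e i : m)‖ ^ 2) ≤ ∑ j, ‖K (f j : m)‖ ^ 2 := by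
    -- K maps W into Wᗮ
    have hKW : ∀ x : W, K (x : m) ∈ Wᗮ := by
      intro x
      rw [Submodule.mem_orthogonal']
      intro u hu
      exact hW _ x.2 u hu
    -- Parseval in Wᗮ
    have hPar : ∀ i, ‖K (e i : m)‖ ^ 2 = ∑ j, ⟪(e i : m), K (f j : m)⟫ ^ 2 := by
      intro i
      set v : Wᗮ := ⟨K (e i : m), hKW (e i)⟩ with hv
      have h1 : ‖K (e i : m)‖ ^ 2 = ⟪v, v⟫ := by
        rw [real_inner_self_eq_norm_sq]; rfl
      rw [h1, ← f.sum_inner_mul_inner v v]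
      congr 1
      ext j
      have h2 : ⟪v, f j⟫ = ⟪K (e i : m), (f j : m)⟫ := rfl
      have h3 : ⟪f j, v⟫ = ⟪(f j : m), K (e i : m)⟫ := rfl
      rw [h2, h3, real_inner_comm ((f j : m)) (K (e i : m))]
      rw [real_inner_comm (K (f j : m)) ((e i : m)), hK (f j : m) (e i : m)]
      ring
    rw [Finset.sum_congr rfl fun i _ => hPar i, Finset.sum_comm]
    -- Bessel's inequality
    apply Finset.sum_le_sum
    intro j _
    have hon : Orthonormal ℝ (fun i => ((e i : W) : m)) :=
      e.orthonormal.comp_linearIsometry W.subtypeₗᵢ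
    have := hon.sum_inner_products_le (K (f j : m)) (s := Finset.univ)
    simpa [Real.norm_eq_abs, sq_abs] using this
  linarith
end

section
/- Let (V, ⟨·,·⟩) be a finite-dimensional real inner product space, e ∈ V a unit vector, and m = e^⊥. Let A be an endomorphism of V with A(e) = λ·e for some λ ∈ ℝ, and write, for x ∈ m, A(x) = N(x) + ⟨v, x⟩·e with N an endomorphism of m and v ∈ m. Let W ⊆ m be a subspace invariant under N and π_W the orthogonal projection of V onto W. Then Tr([A, Aᵀ] π_W) ≥ −‖π_W v‖², where Aᵀ is the adjoint of A and [A, Aᵀ] = A Aᵀ − Aᵀ A. -/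
open scoped RealInnerProductSpace

lemma trace_onb {E : Type*} [NormedAddCommGroup E] [InnerProductSpace ℝ E]
    [FiniteDimensional ℝ E] {ι : Type*} [Fintype ι] [DecidableEq ι]
    (b : OrthonormalBasis ι ℝ E) (T : E →ₗ[ℝ] E) :
    LinearMap.trace ℝ E T = ∑ i, ⟪b i, T (b i)⟫ := by
  rw [LinearMap.trace_eq_matrix_trace ℝ b.toBasis, Matrix.trace]
  congr 1; ext i
  rw [Matrix.diag_apply, LinearMap.toMatrix_apply, OrthonormalBasis.coe_toBasis,
    ← b.repr_apply_apply, OrthonormalBasis.coe_toBasis_repr_apply]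

lemma norm_sq_onb {E : Type*} [NormedAddCommGroup E] [InnerProductSpace ℝ E]
    {ι : Type*} [Fintype ι] (b : OrthonormalBasis ι ℝ E) (x : E) :
    ‖x‖ ^ 2 = ∑ i, ⟪b i, x⟫ ^ 2 := by
  rw [← b.repr.norm_map x, EuclideanSpace.norm_eq, Real.sq_sqrt (by positivity)]
  simp [b.repr_apply_apply, sq_abs]

/-- Let `(V, ⟨·,·⟩)` be a finite-dimensional real inner product space,
`e` a unit vector, `m = e^⊥`, and `A` an endomorphism with `A e = λ·e` and
`A x = N x + ⟨v, x⟩·e` for `x ∈ m`, where `N` is an endomorphism of `m` and `v ∈ m`. If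
`W ⊆ m` is an `N`-invariant subspace and `π_W` the orthogonal projection onto `W`, then
`Tr([A, Aᵀ] π_W) ≥ -‖π_W v‖²`. -/
theorem trace_commutator_adjoint_proj_ge
    (V : Type*) [NormedAddCommGroup V] [InnerProductSpace ℝ V] [FiniteDimensional ℝ V]
    (e : V) (he : ‖e‖ = 1)
    (m : Submodule ℝ V) (hm : m = (Submodule.span ℝ ({e} : Set V))ᗮ)
    (A : V →ₗ[ℝ] V) (lam : ℝ) (hAe : A e = lam • e)
    (N : m →ₗ[ℝ] m) (v : V) (hv : v ∈ m)
    (hdec : ∀ x : m, A x = (N x : V) + ⟪v, (x : V)⟫ • e)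
    (W : Submodule ℝ V) (hWm : W ≤ m)
    (hWinv : ∀ x : m, (x : V) ∈ W → (N x : V) ∈ W) :
    - ‖((Submodule.orthogonalProjectionOnto W v : W) : V)‖ ^ 2 ≤
      LinearMap.trace ℝ V
        ((A ∘ₗ (LinearMap.adjoint A) - (LinearMap.adjoint A) ∘ₗ A) ∘ₗ
          (W.subtype ∘ₗ (Submodule.orthogonalProjectionOnto W).toLinearMap)) := by
  classical
  have hme : ∀ x : V, x ∈ m → ⟪x, e⟫ = 0 := by
    intro x hx
    rw [hm] at hx
    exact (Submodule.mem_orthogonal_singleton_iff_inner_left).1 hx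
  set b := stdOrthonormalBasis ℝ W with hb
  set K := A ∘ₗ (LinearMap.adjoint A) - (LinearMap.adjoint A) ∘ₗ A with hK
  -- trace computation
  have h1 : LinearMap.trace ℝ V (K ∘ₗ (W.subtype ∘ₗ (Submodule.orthogonalProjectionOnto W).toLinearMap))
      = ∑ i, (‖LinearMap.adjoint A (b i : V)‖ ^ 2 - ‖A (b i : V)‖ ^ 2) := by
    rw [← LinearMap.comp_assoc, LinearMap.trace_comp_comm', trace_onb b]
    congr 1; ext i
    have h2 : ⟪b i, ((Submodule.orthogonalProjectionOnto W).toLinearMap ∘ₗ (K ∘ₗ W.subtype)) (b i)⟫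
        = ⟪(b i : V), K (b i : V)⟫ := by
      simp only [LinearMap.comp_apply, ContinuousLinearMap.coe_coe, Submodule.coe_subtype]
      rw [Submodule.inner_orthogonalProjectionOnto_eq_of_mem_left]
    rw [h2, hK]
    have e1 : ⟪(b i : V), A (LinearMap.adjoint A (b i : V))⟫
        = ‖LinearMap.adjoint A (b i : V)‖ ^ 2 := by
      rw [← LinearMap.adjoint_inner_left A, real_inner_self_eq_norm_sq]
    have e2 : ⟪(b i : V), LinearMap.adjoint A (A (b i : V))⟫ = ‖A (b i : V)‖ ^ 2 := by
      rw [LinearMap.adjoint_inner_right, real_inner_self_eq_norm_sq]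
    simp only [LinearMap.sub_apply, LinearMap.comp_apply, inner_sub_right]
    rw [e1, e2]
  -- the lifted orthonormal family in m
  have hcmem : ∀ i, ((b i : V)) ∈ m := fun i => hWm (b i).2
  set c : Fin (Module.finrank ℝ W) → m := fun i => ⟨(b i : V), hcmem i⟩ with hc
  have hcon : Orthonormal ℝ c := by
    rw [orthonormal_iff_ite]
    intro i j
    have := (orthonormal_iff_ite.1 b.orthonormal) i j
    rwa [Submodule.coe_inner] at this ⊢
  -- pointwise: norm of A (b i)
  have hA2 : ∀ i, ‖A (b i : V)‖ ^ 2 = ‖N (c i)‖ ^ 2 + ⟪v, (b i : V)⟫ ^ 2 := by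
    intro i
    have hd := hdec (c i)
    have hce : (c i : V) = (b i : V) := rfl
    rw [hce] at hd
    rw [hd, norm_add_sq_real]
    have hz : ⟪((N (c i) : V)), ⟪v, (b i : V)⟫ • e⟫ = 0 := by
      rw [inner_smul_right, hme _ (N (c i)).2, mul_zero]
    rw [hz, norm_smul, he]
    have h8 : ‖(N (c i) : V)‖ = ‖N (c i)‖ := rfl
    rw [h8]
    simp only [Real.norm_eq_abs, mul_one, sq_abs, mul_zero, add_zero]
  -- pointwise: adjoint A on b i
  have hAT : ∀ i, LinearMap.adjoint A (b i : V) = ((LinearMap.adjoint N (c i) : m) : V) := by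
    intro i
    set d : V := LinearMap.adjoint A (b i : V) - ((LinearMap.adjoint N (c i) : m) : V) with hd
    have hdm : d ∈ m := by
      rw [hm, Submodule.mem_orthogonal_singleton_iff_inner_left]
      rw [hd, inner_sub_left, LinearMap.adjoint_inner_left, hAe, inner_smul_right,
        hme _ (hcmem i), hme _ (LinearMap.adjoint N (c i)).2]
      ring
    have hdo : d ∈ mᗮ := by
      intro z hz
      rw [real_inner_comm, hd, inner_sub_left]
      have h1 : ⟪(LinearMap.adjoint A) (b i : V), z⟫ = ⟪(N ⟨z, hz⟩ : V), (b i : V)⟫ := by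
        rw [LinearMap.adjoint_inner_left]
        have h9 := hdec ⟨z, hz⟩
        rw [h9]
        simp only [inner_add_right, inner_smul_right]
        rw [hme _ (hcmem i), mul_zero, add_zero, real_inner_comm]
      have h2 : ⟪((LinearMap.adjoint N (c i) : m) : V), z⟫ = ⟪(N ⟨z, hz⟩ : V), (b i : V)⟫ := by
        calc ⟪((LinearMap.adjoint N (c i) : m) : V), z⟫
            = ⟪(LinearMap.adjoint N (c i)), (⟨z, hz⟩ : m)⟫ := rfl
          _ = ⟪(N ⟨z, hz⟩ : m), c i⟫ := by
              rw [real_inner_comm, LinearMap.adjoint_inner_right]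
          _ = ⟪(N ⟨z, hz⟩ : V), (b i : V)⟫ := rfl
      rw [h1, h2, sub_self]
    have hd0 : d = 0 := by
      have := Submodule.inner_right_of_mem_orthogonal hdm hdo
      rwa [inner_self_eq_zero] at this
    exact sub_eq_zero.1 hd0
  rw [h1]
  -- norm of projection of v
  have hπ : ‖((Submodule.orthogonalProjectionOnto W v : W) : V)‖ ^ 2 = ∑ i, ⟪v, (b i : V)⟫ ^ 2 := by
    have h10 : ‖((Submodule.orthogonalProjectionOnto W v : W) : V)‖ = ‖(Submodule.orthogonalProjectionOnto W v : W)‖ := rfl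
    rw [h10, norm_sq_onb b]
    refine Finset.sum_congr rfl fun i _ => ?_
    rw [Submodule.inner_orthogonalProjectionOnto_eq_of_mem_left, real_inner_comm]
  -- Parseval for elements of W inside m
  have hpar : ∀ i, ‖N (c i)‖ ^ 2 = ∑ j, ⟪c j, N (c i)⟫ ^ 2 := by
    intro i
    set w : W := ⟨(N (c i) : V), hWinv (c i) (b i).2⟩ with hw
    have h5 : ‖N (c i)‖ = ‖w‖ := rfl
    rw [h5, norm_sq_onb b w]
    refine Finset.sum_congr rfl fun j _ => ?_
    rw [Submodule.coe_inner, Submodule.coe_inner]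
  -- Bessel
  have hbes : ∀ i, ∑ j, ⟪c j, LinearMap.adjoint N (c i)⟫ ^ 2
      ≤ ‖LinearMap.adjoint N (c i)‖ ^ 2 := by
    intro i
    have := hcon.sum_inner_products_le (s := Finset.univ) (LinearMap.adjoint N (c i))
    simpa [Real.norm_eq_abs, sq_abs] using this
  have key : ∑ i, ‖N (c i)‖ ^ 2 ≤ ∑ i, ‖LinearMap.adjoint N (c i)‖ ^ 2 := by
    calc ∑ i, ‖N (c i)‖ ^ 2 = ∑ i, ∑ j, ⟪c j, N (c i)⟫ ^ 2 :=
          Finset.sum_congr rfl fun i _ => hpar i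
      _ = ∑ i, ∑ j, ⟪c j, LinearMap.adjoint N (c i)⟫ ^ 2 := by
          rw [Finset.sum_comm]
          refine Finset.sum_congr rfl fun j _ => Finset.sum_congr rfl fun i _ => ?_
          rw [LinearMap.adjoint_inner_right, real_inner_comm]
      _ ≤ ∑ i, ‖LinearMap.adjoint N (c i)‖ ^ 2 :=
          Finset.sum_le_sum fun i _ => hbes i
  have hnorm : ∀ i, ‖LinearMap.adjoint A (b i : V)‖ = ‖LinearMap.adjoint N (c i)‖ := by
    intro i; rw [hAT i]; rfl
  have hsum : ∑ i, (‖LinearMap.adjoint A (b i : V)‖ ^ 2 - ‖A (b i : V)‖ ^ 2)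
      = (∑ i, ‖LinearMap.adjoint N (c i)‖ ^ 2) - (∑ i, ‖N (c i)‖ ^ 2)
        - ∑ i, ⟪v, (b i : V)⟫ ^ 2 := by
    rw [← Finset.sum_sub_distrib, ← Finset.sum_sub_distrib]
    refine Finset.sum_congr rfl fun i _ => ?_
    rw [hnorm i, hA2 i]; ring
  rw [hsum]
  linarith [key, hπ.ge, hπ.le]
end

section
/- Let l ≥ 4 and let D be any derivation of the standard filiform Lie algebra L_l. Then there exist a, d ∈ ℝ such that D X_1 ∈ a·X_1 + span(X_2,…,X_l), D X_2 ∈ d·X_2 + span(X_3,…,X_l), and D X_i ∈ ((i−2)·a + d)·X_i + span(X_{i+1},…,X_l) for i = 3,…,l (with span of the empty set equal to 0 when i = l). In particular, D(span(X_2,…,X_l)) ⊆ span(X_2,…,X_l) and D(ℝ·X_l) ⊆ ℝ·X_l. -/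
/-- Every derivation `D` of the standard filiform Lie algebra `L_l`
(`l ≥ 4`, basis `X_1, …, X_l`, nonzero brackets `[X_1, X_i] = X_{i+1}` for `2 ≤ i ≤ l-1`)
is lower triangular with diagonal `a, d, a+d, 2a+d, …, (l-2)a+d` for some `a, d ∈ ℝ`:
`D X_1 ∈ a·X_1 + span(X_2, …, X_l)`, `D X_2 ∈ d·X_2 + span(X_3, …, X_l)` and
`D X_i ∈ ((i-2)·a+d)·X_i + span(X_{i+1}, …, X_l)` for `3 ≤ i ≤ l`. In particular `D`
preserves `span(X_2, …, X_l)` and `ℝ·X_l`.  (Here indices are `0`-based: `X_{k+1} = Xb k`.) -/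
theorem derivation_standard_filiform_form
    (L : Type*) [LieRing L] [LieAlgebra ℝ L]
    (l : ℕ) (hl : 4 ≤ l) (Xb : Fin l → L)
    (hindep : LinearIndependent ℝ Xb)
    (hspan : Submodule.span ℝ (Set.range Xb) = ⊤)
    (hbr : ∀ i : Fin l, ∀ hi : (i : ℕ) + 1 < l, 1 ≤ (i : ℕ) →
      ⁅Xb ⟨0, by omega⟩, Xb i⁆ = Xb ⟨(i : ℕ) + 1, hi⟩)
    (hbrlast : ⁅Xb ⟨0, by omega⟩, Xb ⟨l - 1, by omega⟩⁆ = 0)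
    (hab : ∀ i j : Fin l, 1 ≤ (i : ℕ) → 1 ≤ (j : ℕ) → ⁅Xb i, Xb j⁆ = 0)
    (D : LieDerivation ℝ L L) :
    ∃ a d : ℝ,
      (D (Xb ⟨0, by omega⟩) - a • Xb ⟨0, by omega⟩ ∈
        Submodule.span ℝ (Xb '' {i : Fin l | 1 ≤ (i : ℕ)})) ∧
      (D (Xb ⟨1, by omega⟩) - d • Xb ⟨1, by omega⟩ ∈
        Submodule.span ℝ (Xb '' {i : Fin l | 2 ≤ (i : ℕ)})) ∧
      (∀ i : Fin l, 2 ≤ (i : ℕ) →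
        D (Xb i) - ((((i : ℕ) - 1 : ℕ) : ℝ) * a + d) • Xb i ∈
          Submodule.span ℝ (Xb '' {j : Fin l | (i : ℕ) < (j : ℕ)})) ∧
      (∀ x ∈ Submodule.span ℝ (Xb '' {i : Fin l | 1 ≤ (i : ℕ)}),
        D x ∈ Submodule.span ℝ (Xb '' {i : Fin l | 1 ≤ (i : ℕ)})) ∧
      (∀ x ∈ Submodule.span ℝ ({Xb ⟨l - 1, by omega⟩} : Set L),
        D x ∈ Submodule.span ℝ ({Xb ⟨l - 1, by omega⟩} : Set L)) := by
  have h0l : 0 < l := by omega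
  have h1l : 1 < l := by omega
  have h2l : 2 < l := by omega
  have h3l : 3 < l := by omega
  have hspan' : ⊤ ≤ Submodule.span ℝ (Set.range Xb) := hspan.ge
  obtain ⟨b, hb⟩ : ∃ b : Module.Basis (Fin l) ℝ L, ∀ i, b i = Xb i :=
    ⟨Module.Basis.mk hindep hspan', fun i => Module.Basis.mk_apply hindep hspan' i⟩
  have hrepr : ∀ i j : Fin l, b.repr (Xb i) j = if i = j then 1 else 0 := by
    intro i j
    rw [← hb, Module.Basis.repr_self, Finsupp.single_apply]
  -- membership criterion
  have hmem : ∀ (x : L) (s : Set (Fin l)),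
      x ∈ Submodule.span ℝ (Xb '' s) ↔ ∀ i ∉ s, b.repr x i = 0 := by
    intro x s
    have himg : Xb '' s = b '' s := by
      ext y; constructor <;> rintro ⟨i, hi, rfl⟩ <;> exact ⟨i, hi, by rw [hb]⟩
    rw [himg, b.mem_span_image]
    constructor
    · intro h i hi
      by_contra h0
      exact hi (h (Finsupp.mem_support_iff.2 h0))
    · intro h i hi
      by_contra h0
      exact Finsupp.mem_support_iff.1 hi (h i h0)
  set X0 : L := Xb ⟨0, by omega⟩ with hX0
  -- abelian on the ideal
  have habel : ∀ x ∈ Submodule.span ℝ (Xb '' {i : Fin l | 1 ≤ (i : ℕ)}),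
      ∀ j : Fin l, 1 ≤ (j : ℕ) → ⁅x, Xb j⁆ = 0 := by
    intro x hx j hj
    induction hx using Submodule.span_induction with
    | mem y hy => obtain ⟨i, hi, rfl⟩ := hy; exact hab i j hi hj
    | zero => simp
    | add u v _ _ h1 h2 => rw [add_lie, h1, h2, add_zero]
    | smul r u _ h => rw [smul_lie, h, smul_zero]
  -- shift lemma
  have hshift : ∀ (k : ℕ), 1 ≤ k →
      ∀ x ∈ Submodule.span ℝ (Xb '' {i : Fin l | k < (i : ℕ)}),
      ⁅X0, x⁆ ∈ Submodule.span ℝ (Xb '' {i : Fin l | k + 1 < (i : ℕ)}) := by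
    intro k hk x hx
    induction hx using Submodule.span_induction with
    | mem y hy =>
        obtain ⟨i, hi, rfl⟩ := hy
        simp only [Set.mem_setOf_eq] at hi
        by_cases hi1 : (i : ℕ) + 1 < l
        · rw [hbr i hi1 (by omega)]
          refine Submodule.subset_span ⟨⟨(i : ℕ) + 1, hi1⟩, ?_, rfl⟩
          show k + 1 < (i : ℕ) + 1
          omega
        · have : i = ⟨l - 1, by omega⟩ := by
            apply Fin.ext
            show (i : ℕ) = l - 1
            omega
          rw [this, hbrlast]
          exact Submodule.zero_mem _
    | zero => rw [lie_zero]; exact Submodule.zero_mem _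
    | add u v _ _ h1 h2 => rw [lie_add]; exact Submodule.add_mem _ h1 h2
    | smul r u _ h => rw [lie_smul]; exact Submodule.smul_mem _ r h
  -- coefficient of X0 in D (Xb j)
  set c0 : Fin l → ℝ := fun j => b.repr (D (Xb j)) ⟨0, by omega⟩ with hc0
  have hdec : ∀ j : Fin l, D (Xb j) - c0 j • X0 ∈
      Submodule.span ℝ (Xb '' {i : Fin l | 1 ≤ (i : ℕ)}) := by
    intro j
    rw [hmem]
    intro i hi
    simp only [Set.mem_setOf_eq, not_le] at hi
    have hi0 : i = ⟨0, h0l⟩ := by apply Fin.ext; show (i : ℕ) = 0; omega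
    rw [hi0, map_sub, map_smul, hX0]
    simp [Finsupp.coe_sub, Pi.sub_apply, Finsupp.coe_smul, Pi.smul_apply,
      hrepr, smul_eq_mul, hc0]
  have hdecEq : ∀ j : Fin l, D (Xb j) = c0 j • X0 + (D (Xb j) - c0 j • X0) := by
    intro j; abel
  -- bracket of D (Xb j) with Xb i for i ≥ 1
  have hDbr : ∀ j i : Fin l, 1 ≤ (i : ℕ) → ⁅D (Xb j), Xb i⁆ = c0 j • ⁅X0, Xb i⁆ := by
    intro j i hi
    conv_lhs => rw [hdecEq j]
    rw [add_lie, smul_lie, habel _ (hdec j) i hi, add_zero]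
  -- c0 of X1 is zero
  have hc01 : c0 ⟨1, by omega⟩ = 0 := by
    have h0 : ⁅Xb ⟨1, by omega⟩, Xb ⟨2, by omega⟩⁆ = (0 : L) :=
      hab _ _ (by show 1 ≤ 1; omega) (by show 1 ≤ 2; omega)
    have heq := D.apply_lie_eq_add (Xb ⟨1, by omega⟩) (Xb ⟨2, by omega⟩)
    rw [h0, map_zero] at heq
    have h1 : ⁅D (Xb ⟨1, by omega⟩), Xb ⟨2, by omega⟩⁆
        = c0 ⟨1, by omega⟩ • Xb ⟨3, by omega⟩ := by
      rw [hDbr _ _ (by show 1 ≤ 2; omega),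
        hbr ⟨2, by omega⟩ (by show 2 + 1 < l; omega) (by show 1 ≤ 2; omega)]
    have h2 : ⁅Xb ⟨1, by omega⟩, D (Xb ⟨2, by omega⟩)⁆
        = -(c0 ⟨2, by omega⟩ • Xb ⟨2, by omega⟩) := by
      rw [← lie_skew, hDbr _ _ (by show 1 ≤ 1; omega),
        hbr ⟨1, by omega⟩ (by show 1 + 1 < l; omega) (by show 1 ≤ 1; omega)]
    rw [h1, h2] at heq
    have h3 := congrArg (fun z => b.repr z ⟨3, by omega⟩) heq.symm
    simp only [map_add, map_neg, map_smul, map_zero, Finsupp.coe_add, Finsupp.coe_neg,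
      Finsupp.coe_smul, Pi.add_apply, Pi.neg_apply, Pi.smul_apply, hrepr, smul_eq_mul,
      Fin.mk.injEq, Finsupp.coe_zero, Pi.zero_apply] at h3
    simpa using h3
  -- c0 of all Xb i, i ≥ 1, is zero
  have hc0all : ∀ i : Fin l, 1 ≤ (i : ℕ) → c0 i = 0 := by
    intro i hi
    have h0 : ⁅Xb ⟨1, by omega⟩, Xb i⁆ = (0 : L) := hab _ _ (by show 1 ≤ 1; omega) hi
    have heq := D.apply_lie_eq_add (Xb ⟨1, by omega⟩) (Xb i)
    rw [h0, map_zero] at heq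
    have h1 : ⁅D (Xb ⟨1, by omega⟩), Xb i⁆ = 0 := by
      rw [hDbr _ _ hi, hc01, zero_smul]
    have h2 : ⁅Xb ⟨1, by omega⟩, D (Xb i)⁆ = -(c0 i • Xb ⟨2, by omega⟩) := by
      rw [← lie_skew, hDbr _ _ (by show 1 ≤ 1; omega),
        hbr ⟨1, by omega⟩ (by show 1 + 1 < l; omega) (by show 1 ≤ 1; omega)]
    rw [h1, h2, add_zero] at heq
    have hne : Xb ⟨2, by omega⟩ ≠ 0 := hindep.ne_zero _
    have := neg_eq_zero.mp heq.symm
    rcases smul_eq_zero.mp this with h | h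
    · exact h
    · exact absurd h hne
  obtain ⟨a, ha⟩ : ∃ r : ℝ, c0 ⟨0, h0l⟩ = r := ⟨_, rfl⟩
  obtain ⟨d, hd⟩ : ∃ r : ℝ, b.repr (D (Xb ⟨1, h1l⟩)) ⟨1, h1l⟩ = r := ⟨_, rfl⟩
  -- main induction
  have key : ∀ n : ℕ, 1 ≤ n → ∀ hn : n < l,
      D (Xb ⟨n, hn⟩) - (((n - 1 : ℕ) : ℝ) * a + d) • Xb ⟨n, hn⟩ ∈
        Submodule.span ℝ (Xb '' {j : Fin l | n < (j : ℕ)}) := by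
    intro n
    induction n with
    | zero => omega
    | succ m ih =>
      intro _ hn
      by_cases hm : 1 ≤ m
      · -- inductive step
        have hml : m < l := by omega
        have hbrm := hbr ⟨m, hml⟩ (by show m + 1 < l; omega) (by show 1 ≤ m; omega)
        have hIH := ih hm hml
        obtain ⟨lam, hlam⟩ : ∃ r : ℝ, ((m - 1 : ℕ) : ℝ) * a + d = r := ⟨_, rfl⟩
        rw [hlam] at hIH
        obtain ⟨y, hy, hDmEq⟩ : ∃ y ∈ Submodule.span ℝ (Xb '' {j : Fin l | m < (j : ℕ)}),
            D (Xb ⟨m, hml⟩) = lam • Xb ⟨m, hml⟩ + y :=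
          ⟨_, hIH, by abel⟩
        have hDsum := D.apply_lie_eq_add X0 (Xb ⟨m, hml⟩)
        rw [hbrm] at hDsum
        have h1 : ⁅D X0, Xb ⟨m, hml⟩⁆ = a • Xb ⟨m + 1, hn⟩ := by
          rw [hDbr _ _ (by show 1 ≤ m; omega), hbrm]
          congr 1
        have h2 : ⁅X0, D (Xb ⟨m, hml⟩)⁆ = lam • Xb ⟨m + 1, hn⟩ + ⁅X0, y⁆ := by
          rw [hDmEq, lie_add, lie_smul, hbrm]
        have hcoef : (((m + 1 - 1 : ℕ) : ℝ) * a + d) = a + lam := by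
          rw [← hlam]
          have h5 : ((m - 1 : ℕ) : ℝ) = (m : ℝ) - 1 := by
            rw [Nat.cast_sub hm]; norm_num
          rw [h5]
          push_cast
          ring
        have hfinal : D (Xb ⟨m + 1, hn⟩)
            - (((m + 1 - 1 : ℕ) : ℝ) * a + d) • Xb ⟨m + 1, hn⟩ = ⁅X0, y⁆ := by
          rw [hcoef, hDsum, h1, h2, add_smul]
          abel
        rw [hfinal]
        exact hshift m hm y hy
      · -- base case m = 0, n = 1
        have hm0 : m = 0 := by omega
        subst hm0
        rw [hmem]
        intro i hi
        simp only [Set.mem_setOf_eq, not_lt] at hi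
        rw [map_sub, map_smul]
        have hcases : (i : ℕ) = 0 ∨ (i : ℕ) = 1 := by omega
        have h01 : b.repr (D (Xb ⟨0 + 1, hn⟩)) ⟨0, by omega⟩ = 0 :=
          hc0all ⟨0 + 1, hn⟩ (by show 1 ≤ 1; omega)
        rcases hcases with h | h
        · have hi0 : i = ⟨0, by omega⟩ := by apply Fin.ext; show (i : ℕ) = 0; omega
          rw [hi0]
          simp only [Finsupp.coe_sub, Pi.sub_apply, Finsupp.coe_smul, Pi.smul_apply,
            hrepr, smul_eq_mul, Fin.mk.injEq]
          rw [h01]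
          norm_num
        · have hi1 : i = ⟨1, by omega⟩ := by apply Fin.ext; show (i : ℕ) = 1; omega
          rw [hi1]
          simp only [Finsupp.coe_sub, Pi.sub_apply, Finsupp.coe_smul, Pi.smul_apply,
            hrepr, smul_eq_mul, Fin.mk.injEq]
          have hdd : b.repr (D (Xb ⟨0 + 1, hn⟩)) ⟨1, by omega⟩ = d := hd
          rw [hdd]
          norm_num
  refine ⟨a, d, ?_, ?_, ?_, ?_, ?_⟩
  · exact ha ▸ hdec ⟨0, h0l⟩
  · have hk := key 1 le_rfl (by omega)
    simp only [Nat.sub_self, Nat.cast_zero, zero_mul, zero_add] at hk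
    have hset : ({i : Fin l | 2 ≤ (i : ℕ)} : Set (Fin l)) = {j : Fin l | 1 < (j : ℕ)} := by
      ext i; simp only [Set.mem_setOf_eq]; omega
    rw [hset]
    exact hk
  · intro i hi
    have hk := key (i : ℕ) (by omega) i.isLt
    simp only [Fin.eta] at hk
    exact hk
  · intro x hx
    induction hx using Submodule.span_induction with
    | mem y hy =>
        obtain ⟨i, hi, rfl⟩ := hy
        simp only [Set.mem_setOf_eq] at hi
        have hkey := key (i : ℕ) hi i.isLt
        simp only [Fin.eta] at hkey
        have hsplit : D (Xb i) = ((((i : ℕ) - 1 : ℕ) : ℝ) * a + d) • Xb i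
            + (D (Xb i) - ((((i : ℕ) - 1 : ℕ) : ℝ) * a + d) • Xb i) := by abel
        rw [hsplit]
        refine Submodule.add_mem _ (Submodule.smul_mem _ _
          (Submodule.subset_span ⟨i, hi, rfl⟩)) ?_
        refine Submodule.span_mono (Set.image_mono ?_) hkey
        intro j hj
        simp only [Set.mem_setOf_eq] at hj ⊢
        omega
    | zero => rw [map_zero]; exact Submodule.zero_mem _
    | add u v _ _ h1 h2 => rw [map_add]; exact Submodule.add_mem _ h1 h2
    | smul r u _ h => rw [map_smul]; exact Submodule.smul_mem _ r h
  · intro x hx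
    have hlast : D (Xb ⟨l - 1, by omega⟩) ∈
        Submodule.span ℝ ({Xb ⟨l - 1, by omega⟩} : Set L) := by
      have hkey := key (l - 1) (by omega) (by omega)
      have hempty : ({j : Fin l | l - 1 < (j : ℕ)} : Set (Fin l)) = ∅ := by
        ext j; simp only [Set.mem_setOf_eq, Set.mem_empty_iff_false, iff_false, not_lt]
        omega
      rw [hempty, Set.image_empty, Submodule.span_empty, Submodule.mem_bot,
        sub_eq_zero] at hkey
      rw [hkey]
      exact Submodule.smul_mem _ _ (Submodule.subset_span rfl)
    induction hx using Submodule.span_induction with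
    | mem y hy => rw [Set.mem_singleton_iff] at hy; rw [hy]; exact hlast
    | zero => rw [map_zero]; exact Submodule.zero_mem _
    | add u v _ _ h1 h2 => rw [map_add]; exact Submodule.add_mem _ h1 h2
    | smul r u _ h => rw [map_smul]; exact Submodule.smul_mem _ r h
end
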